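/- Let n ≥ 3 and k ≥ 3 be odd integers and c any integer. Then in the ring R(n,k,c) one has the identity (n+1)·x²·(k·y^{n+k−2} + (n+1)·x^{n+k−2} + (y+c·x)^{n+k−2}) + k·y²·((k−1)·y^{n+k−2} + (n+1)·x^{n+k−2} + (y+c·x)^{n+k−2}) + (y+c·x)²·(k·y^{n+k−2} + (n+1)·x^{n+k−2}) = ( k·(C(n+k−3, n) − (k−1))·c^n + (n+1)·(C(n+k−3, n−2) − k)·c^{n−2} ) · x^n · y^k, where C denotes the binomial coefficient. -/
import Mathlib


open MvPolynomial

noncomputable section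

/-- The ideal `(X^{n+1}, Y^{k+1} + c·X·Y^k)` in `ℤ[X,Y]`. -/
def relIdeal (n k : ℕ) (c : ℤ) : Ideal (MvPolynomial (Fin 2) ℤ) :=
  Ideal.span {(X 0 : MvPolynomial (Fin 2) ℤ) ^ (n + 1),
    (X 1 : MvPolynomial (Fin 2) ℤ) ^ (k + 1) + C c * X 0 * (X 1 : MvPolynomial (Fin 2) ℤ) ^ k}

/-- The ring `R(n,k,c) = ℤ[X,Y]/(X^{n+1}, Y^{k+1} + c·X·Y^k)`. -/
abbrev R (n k : ℕ) (c : ℤ) := MvPolynomial (Fin 2) ℤ ⧸ relIdeal n k c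

/-- The image `x` of `X` in `R(n,k,c)`. -/
def x (n k : ℕ) (c : ℤ) : R n k c := Ideal.Quotient.mk (relIdeal n k c) (X 0)

/-- The image `y` of `Y` in `R(n,k,c)`. -/
def y (n k : ℕ) (c : ℤ) : R n k c := Ideal.Quotient.mk (relIdeal n k c) (X 1)

lemma hX (n k : ℕ) (c : ℤ) : x n k c ^ (n+1) = 0 := by
  rw [x, ← map_pow, Ideal.Quotient.eq_zero_iff_mem]
  exact Ideal.subset_span (Set.mem_insert _ _)

lemma hY (n k : ℕ) (c : ℤ) :
    y n k c ^ (k+1) = -((c : R n k c) * (x n k c * y n k c ^ k)) := by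
  have h : Ideal.Quotient.mk (relIdeal n k c)
      ((X 1 : MvPolynomial (Fin 2) ℤ) ^ (k + 1) + C c * X 0 * (X 1) ^ k) = 0 := by
    rw [Ideal.Quotient.eq_zero_iff_mem]
    exact Ideal.subset_span (Set.mem_insert_of_mem _ rfl)
  rw [eq_intCast (C : ℤ →+* MvPolynomial (Fin 2) ℤ) c] at h
  simp only [map_add, map_mul, map_pow, map_intCast] at h
  rw [x, y]
  linear_combination h

lemma hXz (n k : ℕ) (c : ℤ) (j : ℕ) (hj : n + 1 ≤ j) : x n k c ^ j = 0 := by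
  obtain ⟨d, rfl⟩ := Nat.exists_eq_add_of_le hj
  rw [pow_add, hX, zero_mul]

lemma hYred (n k : ℕ) (c : ℤ) (j : ℕ) :
    y n k c ^ (k + j) = (-(c : R n k c))^j * x n k c ^ j * y n k c ^ k := by
  induction j with
  | zero => simp
  | succ j ih =>
    have : k + (j+1) = (k + j) + 1 := by omega
    rw [this, pow_succ, ih]
    have h2 : y n k c ^ k * y n k c = y n k c ^ (k+1) := by rw [pow_succ]
    calc (-(c : R n k c))^j * x n k c ^ j * y n k c ^ k * y n k c
        = (-(c : R n k c))^j * x n k c ^ j * (y n k c ^ (k+1)) := by rw [← h2]; ring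
      _ = (-(c : R n k c))^(j+1) * x n k c ^ (j+1) * y n k c ^ k := by
          rw [hY]; ring

lemma altsum (M : ℕ) (t : ℕ) :
    ∑ i ∈ Finset.range (t+1), (-1:ℤ)^i * ((M+1).choose i) = (-1)^t * (M.choose t) := by
  induction t with
  | zero => simp
  | succ t ih =>
    rw [Finset.sum_range_succ, ih, Nat.choose_succ_succ]
    push_cast
    ring

lemma negone_sq (j : ℕ) : (-1:ℤ)^(2*j) = 1 := by
  rw [pow_mul]; norm_num

lemma altsum' (M t : ℕ) :
    ∑ i ∈ Finset.range (t+1), (-1:ℤ)^(t-i) * ((M+1).choose i) = (M.choose t) := by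
  have h : ∀ i ∈ Finset.range (t+1), (-1:ℤ)^(t-i) * ((M+1).choose i)
      = (-1)^t * ((-1)^i * ((M+1).choose i)) := by
    intro i hi
    rw [Finset.mem_range] at hi
    have h2 : (-1:ℤ)^(t-i) = (-1)^(t-i) * (-1)^(2*i) := by rw [negone_sq]; ring
    rw [h2, ← pow_add, show t - i + 2*i = t + i by omega, pow_add]
    ring
  rw [Finset.sum_congr rfl h, ← Finset.mul_sum, altsum, ← mul_assoc, ← pow_add,
    show t + t = 2*t by omega, negone_sq, one_mul]

set_option maxHeartbeats 1000000 in
lemma key (n k : ℕ) (c : ℤ) (hn : 3 ≤ n) (hk : 3 ≤ k) (e f : ℕ) (hef : e + f = 2) :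
    x n k c ^ e * y n k c ^ f * (y n k c + (c : R n k c) * x n k c) ^ (n + k - 2)
    = ((n+k-3).choose (n-e) : R n k c) * (c : R n k c)^(n-e)
      * (x n k c ^ n * y n k c ^ k) := by
  have he : e ≤ 2 := by omega
  set X := x n k c with hXdef
  set Y := y n k c with hYdef
  set cc : R n k c := (c : R n k c) with hccdef
  set m := n + k - 2 with hm
  set t := n - e with ht
  have expand : X ^ e * Y ^ f * (Y + cc * X) ^ m
      = ∑ i ∈ Finset.range (m+1), cc^i * ((m.choose i : ℕ) : R n k c)
          * (X^(e+i) * Y^(f+(m-i))) := by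
    rw [add_comm Y (cc * X), add_pow, Finset.mul_sum]
    refine Finset.sum_congr rfl fun i hi => ?_
    rw [mul_pow, pow_add, pow_add]
    ring
  rw [expand]
  have hsub : Finset.range (t+1) ⊆ Finset.range (m+1) := by
    apply Finset.range_subset_range.2; omega
  rw [← Finset.sum_subset hsub (by
    intro i hi hni
    rw [Finset.mem_range] at hi hni
    have hz : X^(e+i) = 0 := hXz n k c _ (by omega)
    rw [hz]
    ring)]
  have hcongr : ∀ i ∈ Finset.range (t+1),
      cc^i * ((m.choose i : ℕ) : R n k c) * (X^(e+i) * Y^(f+(m-i)))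
      = ((-1 : R n k c)^(t-i) * ((m.choose i : ℕ) : R n k c)) * (cc^t * (X^n * Y^k)) := by
    intro i hi
    rw [Finset.mem_range] at hi
    have h1 : f + (m - i) = k + (t - i) := by omega
    rw [h1, hYred n k c (t-i)]
    have h3 : X^(e+i) * X^(t-i) = X^n := by rw [← pow_add]; congr 1; omega
    have h4 : (-cc)^(t-i) = (-1 : R n k c)^(t-i) * cc^(t-i) := by
      rw [show -cc = (-1 : R n k c) * cc by ring, mul_pow]
    have h5 : cc^i * cc^(t-i) = cc^t := by rw [← pow_add]; congr 1; omega
    linear_combination (cc^i * ((m.choose i : ℕ) : R n k c) * X^(e+i) * X^(t-i) * Y^k) * h4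
      + ((-1 : R n k c)^(t-i) * cc^(t-i) * cc^i * ((m.choose i : ℕ) : R n k c) * Y^k) * h3
      + ((-1 : R n k c)^(t-i) * ((m.choose i : ℕ) : R n k c) * X^n * Y^k) * h5
  rw [Finset.sum_congr rfl hcongr, ← Finset.sum_mul]
  have hz : (∑ i ∈ Finset.range (t+1), ((-1:ℤ)^(t-i) * ((m.choose i : ℕ) : ℤ)) : ℤ)
      = ((n+k-3).choose t : ℤ) := by
    have h := altsum' (n+k-3) t
    rw [show (n+k-3)+1 = m by omega] at h
    exact_mod_cast h
  have hcast : (∑ i ∈ Finset.range (t+1),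
        ((-1 : R n k c)^(t-i) * ((m.choose i : ℕ) : R n k c)))
      = (((n+k-3).choose t : ℕ) : R n k c) := by
    have := congrArg (fun z : ℤ => (z : R n k c)) hz
    push_cast at this
    exact this
  rw [hcast]
  ring

lemma my_neg_pow {A : Type*} [CommRing A] (a : A) {j : ℕ} (h : Odd j) : (-a)^j = -(a^j) :=
  Odd.neg_pow h a

lemma my_neg_sq {A : Type*} [CommRing A] (a : A) : (-a)^2 = a^2 := neg_sq a

lemma hY2Ym (n k : ℕ) (c : ℤ) (hn : 3 ≤ n) (hk : 3 ≤ k) (hno : Odd n) :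
    y n k c ^ 2 * y n k c ^ (n + k - 2)
      = -((c : R n k c)^n * (x n k c ^ n * y n k c ^ k)) := by
  rw [← pow_add, show 2 + (n + k - 2) = k + n by omega, hYred n k c n]
  have hnp : (-(c : R n k c))^n = -((c : R n k c)^n) := my_neg_pow _ hno
  rw [hnp]
  ring

lemma hX2Ym (n k : ℕ) (c : ℤ) (hn : 3 ≤ n) (hk : 3 ≤ k) (hno : Odd n) :
    x n k c ^ 2 * y n k c ^ (n + k - 2)
      = -((c : R n k c)^(n-2) * (x n k c ^ n * y n k c ^ k)) := by
  have ho : Odd (n - 2) := Nat.Odd.sub_even (by omega) hno even_two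
  rw [show n + k - 2 = k + (n - 2) by omega, hYred n k c (n-2)]
  have hnp : (-(c : R n k c))^(n-2) = -((c : R n k c)^(n-2)) := my_neg_pow _ ho
  rw [hnp]
  have h3 : x n k c ^ 2 * x n k c ^ (n-2) = x n k c ^ n := by
    rw [← pow_add]; congr 1; omega
  linear_combination (-((c : R n k c)^(n-2)) * y n k c ^ k) * h3

lemma hZ2Ym (n k : ℕ) (c : ℤ) (hn : 3 ≤ n) (hk : 3 ≤ k) :
    (y n k c + (c : R n k c) * x n k c) ^ 2 * y n k c ^ (n + k - 2) = 0 := by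
  set X := x n k c
  set Y := y n k c
  set cc : R n k c := (c : R n k c) with hccdef
  rw [show n + k - 2 = k + (n - 2) by omega, hYred n k c (n-2)]
  have q1 : Y^(k+2) = cc^2 * (X^2 * Y^k) := by
    have hnp : (-(c : R n k c))^2 = (c : R n k c)^2 := my_neg_sq _
    rw [hYred n k c 2, hnp]; ring
  have q2 : Y^(k+1) = -(cc * (X * Y^k)) := hY n k c
  have s1 : Y^k * Y^2 = Y^(k+2) := by rw [← pow_add]
  have s2 : Y^k * Y = Y^(k+1) := (pow_succ _ _).symm
  set w : R n k c := (-cc)^(n-2) * X^(n-2) with hw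
  linear_combination w * s1 + w * q1 + (2*cc*X*w) * s2 + (2*cc*X*w) * q2

set_option maxHeartbeats 1000000

/-- Let `n, k ≥ 3` be odd and `c` any integer. Then in `R(n,k,c)` the q-number
identity of Proposition 3.4 holds:
`(n+1)·x²·(k·y^{n+k-2} + (n+1)·x^{n+k-2} + (y+cx)^{n+k-2})
 + k·y²·((k-1)·y^{n+k-2} + (n+1)·x^{n+k-2} + (y+cx)^{n+k-2})
 + (y+cx)²·(k·y^{n+k-2} + (n+1)·x^{n+k-2})
 = (k·(C(n+k-3,n) - (k-1))·c^n + (n+1)·(C(n+k-3,n-2) - k)·c^{n-2})·x^n·y^k`. -/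
theorem stmt9 (n k : ℕ) (hn : 3 ≤ n) (hk : 3 ≤ k) (hno : Odd n) (hko : Odd k) (c : ℤ) :
    ((n : ℤ) + 1) • (x n k c ^ 2 *
        ((k : ℤ) • y n k c ^ (n + k - 2) + ((n : ℤ) + 1) • x n k c ^ (n + k - 2)
          + (y n k c + c • x n k c) ^ (n + k - 2)))
      + (k : ℤ) • (y n k c ^ 2 *
        (((k : ℤ) - 1) • y n k c ^ (n + k - 2) + ((n : ℤ) + 1) • x n k c ^ (n + k - 2)
          + (y n k c + c • x n k c) ^ (n + k - 2)))
      + (y n k c + c • x n k c) ^ 2 *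
        ((k : ℤ) • y n k c ^ (n + k - 2) + ((n : ℤ) + 1) • x n k c ^ (n + k - 2))
      = ((k : ℤ) * (((n + k - 3).choose n : ℤ) - ((k : ℤ) - 1)) * c ^ n
          + ((n : ℤ) + 1) * (((n + k - 3).choose (n - 2) : ℤ) - (k : ℤ)) * c ^ (n - 2))
        • (x n k c ^ n * y n k c ^ k) := by
  have K2 := key n k c hn hk 2 0 rfl
  have K0 := key n k c hn hk 0 2 rfl
  rw [pow_zero, mul_one] at K2
  rw [pow_zero, one_mul, Nat.sub_zero] at K0
  have hxm : x n k c ^ (n + k - 2) = 0 := hXz n k c _ (by omega)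
  have h1 := hY2Ym n k c hn hk hno
  have h2 := hX2Ym n k c hn hk hno
  have h3 := hZ2Ym n k c hn hk
  simp only [zsmul_eq_mul]
  push_cast
  linear_combination ((n:R n k c)+1) * K2 + (k:R n k c) * K0
    + ((n:R n k c)+1) * (k:R n k c) * h2
    + (k:R n k c) * ((k:R n k c)-1) * h1
    + (k:R n k c) * h3
    + (((n:R n k c)+1) * (((n:R n k c)+1) * x n k c ^ 2 + (k:R n k c) * y n k c ^ 2)
        + ((n:R n k c)+1) * (y n k c + (c:R n k c) * x n k c)^2) * hxm
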